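/- Under the hypotheses of the previous statement, the consumption function w ↦ c(w) defined implicitly by the Euler equation u'(c(w)) = Σ_n π_n β_n R_n u'(R_n(w − c(w)) + Y_n) is continuously differentiable on (0,∞) with derivative c'(w) = (−Σ_n π_n β_n R_n² u''(R_n s + Y_n)) / (−u''(c) − Σ_n π_n β_n R_n² u''(R_n s + Y_n)) ∈ (0,1), where s = w − c(w). Consequently the saving function s(w) = w − c(w) satisfies s'(w) = 1 − c'(w) ∈ (0,1). -/

import Mathlib

open Set Filter Topology ContinuousLinearMap

/-- the consumption function defined implicitly by the Euler equation is C¹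
with derivative given by the implicit-function-theorem formula, lying in (0,1); the
saving function has derivative 1 - c'(w) ∈ (0,1). -/
theorem consumption_C1_mpc (u : ℝ → ℝ)
    (hu : ContDiffOn ℝ 2 u (Set.Ioi 0))
    (hu' : ∀ x > (0:ℝ), 0 < deriv u x)
    (hu'' : ∀ x > (0:ℝ), deriv (deriv u) x < 0)
    (hInada : Filter.Tendsto (deriv u) (nhdsWithin 0 (Set.Ioi 0)) Filter.atTop)
    (N : ℕ) (hN : 0 < N)
    (pr β R Y : Fin N → ℝ)
    (hpr : ∀ n, 0 < pr n) (hβ : ∀ n, 0 < β n) (hR : ∀ n, 0 < R n) (hY : ∀ n, 0 < Y n)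
    (c : ℝ → ℝ)
    (hc : ∀ w > (0:ℝ), 0 < c w ∧ c w < w + ⨅ n, Y n / R n)
    (hEuler : ∀ w > (0:ℝ),
      deriv u (c w) = ∑ n, pr n * β n * R n * deriv u (R n * (w - c w) + Y n)) :
    ContDiffOn ℝ 1 c (Set.Ioi 0) ∧
    ∀ w > (0:ℝ),
      deriv c w =
        (-∑ n, pr n * β n * (R n)^2 * deriv (deriv u) (R n * (w - c w) + Y n)) /
        (-deriv (deriv u) (c w)
          - ∑ n, pr n * β n * (R n)^2 * deriv (deriv u) (R n * (w - c w) + Y n)) ∧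
      deriv c w ∈ Set.Ioo (0:ℝ) 1 ∧
      deriv (fun w => w - c w) w = 1 - deriv c w ∧
      (1 - deriv c w) ∈ Set.Ioo (0:ℝ) 1 := by
  haveI : Nonempty (Fin N) := ⟨⟨0, hN⟩⟩
  set m : ℝ := ⨅ n, Y n / R n with hm_def
  have hm_le : ∀ n, m ≤ Y n / R n := fun n =>
    ciInf_le (Set.Finite.bddBelow (Set.finite_range _)) n
  -- positivity of future-period arguments
  have hz : ∀ (n : Fin N) (w x : ℝ), x < w + m → 0 < R n * (w - x) + Y n := by
    intro n w x hx
    have h1 : x < w + Y n / R n := lt_of_lt_of_le hx (by linarith [hm_le n])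
    have h2 : -(Y n / R n) < w - x := by linarith
    have h3 : R n * (-(Y n / R n)) < R n * (w - x) := mul_lt_mul_of_pos_left h2 (hR n)
    have h4 : R n * (-(Y n / R n)) = -Y n := by
      rw [mul_neg, neg_inj, mul_comm, div_mul_eq_mul_div, mul_div_assoc,
        div_self (ne_of_gt (hR n)), mul_one]
    linarith
  -- smoothness of deriv u
  have hu1 : ContDiffOn ℝ 1 (deriv u) (Set.Ioi 0) :=
    hu.deriv_of_isOpen isOpen_Ioi (by norm_num)
  have hu1diff : ∀ x : ℝ, 0 < x → HasDerivAt (deriv u) (deriv (deriv u) x) x := fun x hx =>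
    ((hu1.differentiableOn one_ne_zero).differentiableAt (isOpen_Ioi.mem_nhds hx)).hasDerivAt
  have hanti : StrictAntiOn (deriv u) (Set.Ioi 0) := by
    apply strictAntiOn_of_deriv_neg (convex_Ioi 0) hu1.continuousOn
    intro x hx
    rw [interior_Ioi] at hx
    exact hu'' x hx
  -- uniqueness of the solution of the Euler equation
  have huniq : ∀ w : ℝ, 0 < w → ∀ x y : ℝ,
      0 < x → x < w + m → 0 < y → y < w + m →
      deriv u x = (∑ n, pr n * β n * R n * deriv u (R n * (w - x) + Y n)) →
      deriv u y = (∑ n, pr n * β n * R n * deriv u (R n * (w - y) + Y n)) →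
      x = y := by
    intro w hw
    have main : ∀ x y : ℝ, 0 < x → x < w + m → 0 < y → y < w + m → x < y →
        deriv u x = (∑ n, pr n * β n * R n * deriv u (R n * (w - x) + Y n)) →
        deriv u y = (∑ n, pr n * β n * R n * deriv u (R n * (w - y) + Y n)) →
        False := by
      intro x y hx0 hxm hy0 hym hlt hex hey
      have h1 : deriv u y < deriv u x := hanti (mem_Ioi.mpr hx0) (mem_Ioi.mpr hy0) hlt
      have h2 : ∀ n : Fin N, pr n * β n * R n * deriv u (R n * (w - x) + Y n)
          < pr n * β n * R n * deriv u (R n * (w - y) + Y n) := by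
        intro n
        have hzy : 0 < R n * (w - y) + Y n := hz n w y hym
        have hlt' : R n * (w - y) + Y n < R n * (w - x) + Y n := by
          have := mul_lt_mul_of_pos_left (show w - y < w - x by linarith) (hR n)
          linarith
        have hu1lt : deriv u (R n * (w - x) + Y n) < deriv u (R n * (w - y) + Y n) :=
          hanti (mem_Ioi.mpr hzy) (mem_Ioi.mpr (lt_trans hzy hlt')) hlt'
        have hcoef : 0 < pr n * β n * R n := mul_pos (mul_pos (hpr n) (hβ n)) (hR n)
        exact mul_lt_mul_of_pos_left hu1lt hcoef
      have hsum := Finset.sum_lt_sum_of_nonempty Finset.univ_nonempty fun n _ => h2 n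
      linarith
    intro x y hx0 hxm hy0 hym hex hey
    rcases lt_trichotomy x y with h | h | h
    · exact absurd (main x y hx0 hxm hy0 hym h hex hey) not_false
    · exact h
    · exact absurd (main y x hy0 hym hx0 hxm h hey hex) not_false
  -- main pointwise statement
  have key : ∀ w₀ : ℝ, 0 < w₀ → ContDiffAt ℝ 1 c w₀ ∧
      (deriv c w₀ =
        (-∑ n, pr n * β n * (R n)^2 * deriv (deriv u) (R n * (w₀ - c w₀) + Y n)) /
        (-deriv (deriv u) (c w₀)
          - ∑ n, pr n * β n * (R n)^2 * deriv (deriv u) (R n * (w₀ - c w₀) + Y n)) ∧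
      deriv c w₀ ∈ Set.Ioo (0:ℝ) 1 ∧
      deriv (fun w => w - c w) w₀ = 1 - deriv c w₀ ∧
      (1 - deriv c w₀) ∈ Set.Ioo (0:ℝ) 1) := by
    intro w₀ hw₀
    obtain ⟨hx₀pos, hx₀lt⟩ := hc w₀ hw₀
    have hzn : ∀ n, 0 < R n * (w₀ - c w₀) + Y n := fun n => hz n w₀ (c w₀) hx₀lt
    set S : ℝ := ∑ n, pr n * β n * R n ^ 2 * deriv (deriv u) (R n * (w₀ - c w₀) + Y n)
      with hSdef
    have hSneg : S < 0 := by
      have h0 : S < ∑ _n : Fin N, (0:ℝ) := by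
        apply Finset.sum_lt_sum_of_nonempty Finset.univ_nonempty
        intro n _
        exact mul_neg_of_pos_of_neg (mul_pos (mul_pos (hpr n) (hβ n)) (pow_pos (hR n) 2)) (hu'' _ (hzn n))
      simpa using h0
    have hu2neg : deriv (deriv u) (c w₀) < 0 := hu'' _ hx₀pos
    have hB : deriv (deriv u) (c w₀) + S < 0 := by linarith
    have hBne : deriv (deriv u) (c w₀) + S ≠ 0 := ne_of_lt hB
    -- the function g and its derivative
    set g : ℝ × ℝ → ℝ := fun p =>
      deriv u p.2 - ∑ n, pr n * β n * R n * deriv u (R n * (p.1 - p.2) + Y n) with hgdef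
    set G : (ℝ × ℝ) →L[ℝ] ℝ :=
      (deriv (deriv u) (c w₀)) • snd ℝ ℝ ℝ -
        ∑ n, (pr n * β n * R n) • ((deriv (deriv u) (R n * (w₀ - c w₀) + Y n)) •
          (R n • (fst ℝ ℝ ℝ - snd ℝ ℝ ℝ))) with hGdef
    have hgd : HasFDerivAt g G ((w₀, c w₀) : ℝ × ℝ) := by
      have h1 : HasFDerivAt (fun p : ℝ × ℝ => deriv u p.2)
          ((deriv (deriv u) (c w₀)) • snd ℝ ℝ ℝ) ((w₀, c w₀) : ℝ × ℝ) :=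
        by
          have := (hu1diff _ hx₀pos).comp_hasFDerivAt (f := Prod.snd) ((w₀, c w₀) : ℝ × ℝ)
            (hasFDerivAt_snd (𝕜 := ℝ) (p := ((w₀, c w₀) : ℝ × ℝ)))
          exact this
      have h2 : ∀ n : Fin N, HasFDerivAt
          (fun p : ℝ × ℝ => pr n * β n * R n * deriv u (R n * (p.1 - p.2) + Y n))
          ((pr n * β n * R n) • ((deriv (deriv u) (R n * (w₀ - c w₀) + Y n)) •
            (R n • (fst ℝ ℝ ℝ - snd ℝ ℝ ℝ)))) ((w₀, c w₀) : ℝ × ℝ) := by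
        intro n
        have hlin : HasFDerivAt (fun p : ℝ × ℝ => R n * (p.1 - p.2) + Y n)
            (R n • (fst ℝ ℝ ℝ - snd ℝ ℝ ℝ)) ((w₀, c w₀) : ℝ × ℝ) :=
          ((hasFDerivAt_fst.sub hasFDerivAt_snd).const_mul (R n)).add_const (Y n)
        exact ((hu1diff _ (hzn n)).comp_hasFDerivAt ((w₀, c w₀) : ℝ × ℝ) hlin).const_mul _
      exact h1.sub (HasFDerivAt.fun_sum fun n _ => h2 n)
    -- pointwise formula for G
    have hGv : ∀ v : ℝ × ℝ, G v = (-S) * v.1 + (deriv (deriv u) (c w₀) + S) * v.2 := by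
      intro v
      rw [hGdef]
      simp only [ContinuousLinearMap.sub_apply, ContinuousLinearMap.smul_apply,
        ContinuousLinearMap.coe_sum', Finset.sum_apply, ContinuousLinearMap.coe_fst',
        ContinuousLinearMap.coe_snd', smul_eq_mul]
      have hsum : (∑ n, pr n * β n * R n *
            (deriv (deriv u) (R n * (w₀ - c w₀) + Y n) * (R n * (v.1 - v.2))))
          = S * (v.1 - v.2) := by
        rw [hSdef, Finset.sum_mul]
        exact Finset.sum_congr rfl fun n _ => by ring
      rw [hsum]
      ring
    -- ContDiffAt of g
    have hcd_g : ContDiffAt ℝ 1 g ((w₀, c w₀) : ℝ × ℝ) := by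
      have h1 : ContDiffAt ℝ 1 (fun p : ℝ × ℝ => deriv u p.2) ((w₀, c w₀) : ℝ × ℝ) :=
        (hu1.contDiffAt (isOpen_Ioi.mem_nhds hx₀pos)).comp ((w₀, c w₀) : ℝ × ℝ) contDiffAt_snd
      have h2 : ContDiffAt ℝ 1 (fun p : ℝ × ℝ =>
          ∑ n, pr n * β n * R n * deriv u (R n * (p.1 - p.2) + Y n)) ((w₀, c w₀) : ℝ × ℝ) := by
        apply ContDiffAt.sum
        intro n _
        have hin : ContDiffAt ℝ 1 (fun p : ℝ × ℝ => R n * (p.1 - p.2) + Y n)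
            ((w₀, c w₀) : ℝ × ℝ) :=
          (((contDiff_const.mul (contDiff_fst.sub contDiff_snd)).add contDiff_const)).contDiffAt
        have hcomp' := (hu1.contDiffAt (isOpen_Ioi.mem_nhds (hzn n))).comp ((w₀, c w₀) : ℝ × ℝ) hin
        exact contDiffAt_const.mul hcomp'
      exact h1.sub h2
    -- the local diffeomorphism Ψ
    set T2 : (ℝ × ℝ) →L[ℝ] (ℝ × ℝ) :=
      (fst ℝ ℝ ℝ).prod ((deriv (deriv u) (c w₀) + S)⁻¹ • (snd ℝ ℝ ℝ - (-S) • fst ℝ ℝ ℝ))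
      with hT2def
    have hli : Function.LeftInverse T2 ((fst ℝ ℝ ℝ).prod G) := by
      intro v
      refine Prod.ext rfl ?_
      simp only [hT2def, prod_apply, smul_apply, sub_apply, coe_fst', coe_snd', smul_eq_mul]
      rw [hGv v]
      field_simp
      ring
    have hri : Function.RightInverse T2 ((fst ℝ ℝ ℝ).prod G) := by
      intro v
      refine Prod.ext rfl ?_
      simp only [hT2def, prod_apply, smul_apply, sub_apply, coe_fst', coe_snd', smul_eq_mul]
      rw [hGv]
      field_simp
      ring
    set L : (ℝ × ℝ) ≃L[ℝ] (ℝ × ℝ) :=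
      ContinuousLinearEquiv.equivOfInverse ((fst ℝ ℝ ℝ).prod G) T2 hli hri with hLdef
    set Ψ : ℝ × ℝ → ℝ × ℝ := fun p => (p.1, g p) with hΨdef
    have hΨcd : ContDiffAt ℝ 1 Ψ ((w₀, c w₀) : ℝ × ℝ) := contDiffAt_fst.prodMk hcd_g
    have hΨd : HasFDerivAt Ψ (L : (ℝ × ℝ) →L[ℝ] (ℝ × ℝ)) ((w₀, c w₀) : ℝ × ℝ) :=
      hasFDerivAt_fst.prodMk hgd
    have hgp₀ : g ((w₀, c w₀) : ℝ × ℝ) = 0 := sub_eq_zero_of_eq (hEuler w₀ hw₀)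
    have hΨp₀ : Ψ ((w₀, c w₀) : ℝ × ℝ) = ((w₀, (0:ℝ)) : ℝ × ℝ) := by
      rw [hΨdef]; simp only; rw [hgp₀]
    set inv : ℝ × ℝ → ℝ × ℝ := hΨcd.localInverse hΨd one_ne_zero with hinvdef
    have hinv_img : inv (Ψ ((w₀, c w₀) : ℝ × ℝ)) = ((w₀, c w₀) : ℝ × ℝ) :=
      hΨcd.localInverse_apply_image hΨd one_ne_zero
    have hinv_cd : ContDiffAt ℝ 1 inv (Ψ ((w₀, c w₀) : ℝ × ℝ)) :=
      hΨcd.to_localInverse hΨd one_ne_zero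
    have hstrict : HasStrictFDerivAt Ψ (L : (ℝ × ℝ) →L[ℝ] (ℝ × ℝ)) ((w₀, c w₀) : ℝ × ℝ) :=
      hΨcd.hasStrictFDerivAt' hΨd one_ne_zero
    have hri' : ∀ᶠ q in 𝓝 (Ψ ((w₀, c w₀) : ℝ × ℝ)), Ψ (inv q) = q :=
      hstrict.eventually_right_inverse
    -- the map w ↦ (w, 0)
    have hq : Tendsto (fun w : ℝ => ((w, (0:ℝ)) : ℝ × ℝ)) (𝓝 w₀) (𝓝 (Ψ ((w₀, c w₀) : ℝ × ℝ))) :=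
      (continuous_id.prodMk continuous_const).tendsto' w₀ _ hΨp₀.symm
    have hrinv_w : ∀ᶠ w in 𝓝 w₀, Ψ (inv ((w, (0:ℝ)) : ℝ × ℝ)) = ((w, (0:ℝ)) : ℝ × ℝ) :=
      hq.eventually hri'
    have hinvq : Tendsto (fun w : ℝ => inv ((w, (0:ℝ)) : ℝ × ℝ)) (𝓝 w₀)
        (𝓝 ((w₀, c w₀) : ℝ × ℝ)) := by
      have h := hinv_cd.continuousAt.tendsto.comp hq
      rwa [hinv_img] at h
    have hφt : Tendsto (fun w : ℝ => (inv ((w, (0:ℝ)) : ℝ × ℝ)).2) (𝓝 w₀) (𝓝 (c w₀)) :=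
      (continuous_snd.tendsto _).comp hinvq
    have hopen : IsOpen {p : ℝ × ℝ | 0 < p.2 ∧ p.2 < p.1 + m} :=
      (isOpen_lt continuous_const continuous_snd).inter
        (isOpen_lt continuous_snd (continuous_fst.add continuous_const))
    have hpair : Tendsto (fun w : ℝ => ((w, (inv ((w, (0:ℝ)) : ℝ × ℝ)).2) : ℝ × ℝ))
        (𝓝 w₀) (𝓝 ((w₀, c w₀) : ℝ × ℝ)) :=
      tendsto_id.prodMk_nhds hφt
    have hmem_ev : ∀ᶠ w in 𝓝 w₀,
        ((w, (inv ((w, (0:ℝ)) : ℝ × ℝ)).2) : ℝ × ℝ) ∈ {p : ℝ × ℝ | 0 < p.2 ∧ p.2 < p.1 + m} :=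
      hpair (hopen.mem_nhds ⟨hx₀pos, hx₀lt⟩)
    -- identify c with the local implicit function
    have hev : ∀ᶠ w in 𝓝 w₀, c w = (inv ((w, (0:ℝ)) : ℝ × ℝ)).2 := by
      filter_upwards [hrinv_w, hmem_ev, Ioi_mem_nhds hw₀] with w h1 h2 hw
      obtain ⟨hcw0, hcwm⟩ := hc w hw
      have hfst : (inv ((w, (0:ℝ)) : ℝ × ℝ)).1 = w := congrArg Prod.fst h1
      have hsnd : g (inv ((w, (0:ℝ)) : ℝ × ℝ)) = 0 := congrArg Prod.snd h1
      have hpt : inv ((w, (0:ℝ)) : ℝ × ℝ) = ((w, (inv ((w, (0:ℝ)) : ℝ × ℝ)).2) : ℝ × ℝ) :=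
        Prod.ext hfst rfl
      have hg2 : g ((w, (inv ((w, (0:ℝ)) : ℝ × ℝ)).2) : ℝ × ℝ) = 0 := by
        rw [← hpt]; exact hsnd
      have heq2 : deriv u ((inv ((w, (0:ℝ)) : ℝ × ℝ)).2) =
          ∑ n, pr n * β n * R n *
            deriv u (R n * (w - (inv ((w, (0:ℝ)) : ℝ × ℝ)).2) + Y n) :=
        sub_eq_zero.mp hg2
      exact huniq w hw (c w) _ hcw0 hcwm h2.1 h2.2 (hEuler w hw) heq2
    -- C¹ of c at w₀
    have hinv_cd' : ContDiffAt ℝ 1 inv ((w₀, (0:ℝ)) : ℝ × ℝ) := by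
      rwa [hΨp₀] at hinv_cd
    have hφcd : ContDiffAt ℝ 1 (fun w : ℝ => (inv ((w, (0:ℝ)) : ℝ × ℝ)).2) w₀ :=
      contDiffAt_snd.comp w₀ (hinv_cd'.comp w₀ (contDiffAt_id.prodMk contDiffAt_const))
    have hccd : ContDiffAt ℝ 1 c w₀ := hφcd.congr_of_eventuallyEq hev
    -- derivative of c
    have hcdiff : DifferentiableAt ℝ c w₀ := hccd.differentiableAt one_ne_zero
    have hdc : HasDerivAt c (deriv c w₀) w₀ := hcdiff.hasDerivAt
    have hpair' : HasDerivAt (fun w : ℝ => ((w, c w) : ℝ × ℝ)) ((1:ℝ), deriv c w₀) w₀ :=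
      (hasDerivAt_id w₀).prodMk hdc
    have hcomp0 := HasFDerivAt.comp_hasDerivAt_of_eq w₀ hgd hpair' rfl
    have hcomp : HasDerivAt (fun w : ℝ => g ((w, c w) : ℝ × ℝ))
        (G ((1:ℝ), deriv c w₀)) w₀ := hcomp0
    have hzero : (fun _ : ℝ => (0:ℝ)) =ᶠ[𝓝 w₀] fun w : ℝ => g ((w, c w) : ℝ × ℝ) := by
      filter_upwards [Ioi_mem_nhds hw₀] with w hw
      exact (sub_eq_zero_of_eq (hEuler w hw)).symm
    have hder0 : G ((1:ℝ), deriv c w₀) = 0 := by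
      have h := hcomp.congr_of_eventuallyEq hzero
      exact h.unique (hasDerivAt_const w₀ 0)
    have heqn : (-S) + (deriv (deriv u) (c w₀) + S) * deriv c w₀ = 0 := by
      have h := hGv ((1:ℝ), deriv c w₀)
      rw [hder0] at h
      simp only at h
      linarith [h]
    have hd_eq : deriv c w₀ = (-S) / (-deriv (deriv u) (c w₀) - S) := by
      have hden : -deriv (deriv u) (c w₀) - S ≠ 0 := by
        intro h; apply hBne; linarith
      field_simp
      linarith [heqn]
    have hdpos : 0 < deriv c w₀ := by
      rw [hd_eq]
      apply div_pos (by linarith) (by linarith)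
    have hdlt1 : deriv c w₀ < 1 := by
      rw [hd_eq]
      rw [div_lt_one (by linarith)]
      linarith
    have hsder : deriv (fun w => w - c w) w₀ = 1 - deriv c w₀ :=
      ((hasDerivAt_id w₀).sub hdc).deriv
    exact ⟨hccd, hd_eq, ⟨hdpos, hdlt1⟩, hsder, ⟨by linarith, by linarith⟩⟩
  exact ⟨fun w hw => ((key w hw).1).contDiffWithinAt, fun w hw => (key w hw).2⟩
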